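/- Let B be an infinite atomic Boolean algebra. For b, c, c′ ∈ B let D(b,c,c′) = {a ∈ B : (a is an atom and a ≤ b and c = c′) or (not(a is an atom and a ≤ b) and c ≠ c′)}. Then for every n<ω and every fully complete n-pattern (C,I) there exist elements b_i, c_i, c_i′ ∈ B (i<n) such that, writing D_i = D(b_i, c_i, c_i′): for every (X, n∖X) ∈ C the set ⋂_{i∈X} D_i ∩ ⋂_{j∈n∖X}(B∖D_j) is nonempty, and for every (X, n∖X) ∈ I that set is empty. In particular, every fully complete pattern is exhibitable. -/

import Mathlib

open FirstOrder Language Set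

universe u v w

/-- A partitioned formula `φ(x;y)` (object variables `α`, parameter variables `β`)
exhibits the pattern `(C, I)` (indexed by `S`) in the theory `T`. -/
def ExhibitsPattern {L : FirstOrder.Language.{u, v}} (T : L.Theory) {α β S : Type*}
    (φ : L.Formula (α ⊕ β)) (C I : Set (Set S × Set S)) : Prop :=
  ∃ (M : Theory.ModelType.{u, v, w} T) (b : S → β → M),
    (∀ p ∈ C, ∃ a : α → M,
      (∀ i ∈ p.1, φ.Realize (Sum.elim a (b i))) ∧
      (∀ j ∈ p.2, ¬ φ.Realize (Sum.elim a (b j)))) ∧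
    (∀ p ∈ I, ¬ ∃ a : α → M,
      (∀ i ∈ p.1, φ.Realize (Sum.elim a (b i))) ∧
      (∀ j ∈ p.2, ¬ φ.Realize (Sum.elim a (b j))))

/-- `(C, I)` is a pattern: the condition `(∅, ∅)` is excluded. -/
def IsPattern {S : Type*} (C I : Set (Set S × Set S)) : Prop :=
  (∅, ∅) ∉ C ∧ (∅, ∅) ∉ I

/-- A pattern is exhibitable if some partitioned formula of some complete
first-order theory exhibits it. -/
def Exhibitable {S : Type*} (C I : Set (Set S × Set S)) : Prop :=
  ∃ (L : FirstOrder.Language.{0, 0}) (T : L.Theory) (_ : T.IsComplete) (α β : Type)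
    (φ : L.Formula (α ⊕ β)), ExhibitsPattern.{0, 0, 0} T φ C I

/-- The `n`-pattern `(C, I)` is fully complete: every condition has the form `(X, Xᶜ)`,
`C` is nonempty, and each `(X, Xᶜ)` lies in exactly one of `C` and `I`. -/
def FullyComplete {n : ℕ} (C I : Set (Set (Fin n) × Set (Fin n))) : Prop :=
  (∀ p ∈ C ∪ I, p.2 = p.1ᶜ) ∧ C.Nonempty ∧
    ∀ X : Set (Fin n), Xor' ((X, Xᶜ) ∈ C) ((X, Xᶜ) ∈ I)

/-- The set `D(b, c, c')` of Statement 6. -/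
def Dset {B : Type*} [BooleanAlgebra B] (b c c' : B) : Set B :=
  {a | (IsAtom a ∧ a ≤ b ∧ c = c') ∨ (¬ (IsAtom a ∧ a ≤ b) ∧ c ≠ c')}

/- ### Auxiliary lemmas -/

lemma atom_le_sup_aux {B : Type*} [BooleanAlgebra B] {a x y : B} (ha : IsAtom a)
    (h : a ≤ x ⊔ y) : a ≤ x ∨ a ≤ y := by
  by_contra hc
  push_neg at hc
  have h1 : a ⊓ x = ⊥ := by
    rcases lt_or_eq_of_le (inf_le_left : a ⊓ x ≤ a) with h' | h'
    · exact ha.2 _ h'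
    · exact absurd (h' ▸ inf_le_right) hc.1
  have h2 : a ⊓ y = ⊥ := by
    rcases lt_or_eq_of_le (inf_le_left : a ⊓ y ≤ a) with h' | h'
    · exact ha.2 _ h'
    · exact absurd (h' ▸ inf_le_right) hc.2
  have : a = ⊥ := by
    have := inf_sup_left a x y
    rw [inf_eq_left.mpr h, h1, h2, sup_idem] at this
    exact this
  exact ha.1 this

lemma atom_le_finsetSup_aux {B : Type*} [BooleanAlgebra B] {ι : Type*} {a : B} (ha : IsAtom a)
    {s : Finset ι} {f : ι → B} (h : a ≤ s.sup f) : ∃ i ∈ s, a ≤ f i := by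
  classical
  induction s using Finset.induction_on with
  | empty => simp at h; exact absurd h ha.1
  | insert _ _ hx ih =>
    rw [Finset.sup_insert] at h
    rcases atom_le_sup_aux ha h with h' | h'
    · exact ⟨_, Finset.mem_insert_self _ _, h'⟩
    · obtain ⟨i, hi, hle⟩ := ih h'
      exact ⟨i, Finset.mem_insert_of_mem hi, hle⟩

lemma infinite_atoms_aux (B : Type*) [BooleanAlgebra B] [Infinite B] [IsAtomic B] :
    Infinite {a : B // IsAtom a} := by
  have hinj : Function.Injective (fun x : B => {a : {a : B // IsAtom a} | a.1 ≤ x}) := by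
    intro x y hxy
    rw [BooleanAlgebra.eq_iff_atom_le_iff]
    intro a ha
    exact ⟨fun h => (Set.ext_iff.1 hxy ⟨a, ha⟩).1 h, fun h => (Set.ext_iff.1 hxy ⟨a, ha⟩).2 h⟩
  by_contra hfin
  rw [not_infinite_iff_finite] at hfin
  have : Finite (Set {a : B // IsAtom a}) := inferInstance
  exact (Infinite.of_injective _ hinj).not_finite this

/-- The key combinatorial realization lemma. -/
lemma key_realization (B : Type*) [BooleanAlgebra B] [Infinite B] [IsAtomic B]
    (n : ℕ) (C I : Set (Set (Fin n) × Set (Fin n))) (hfc : FullyComplete C I) :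
    ∃ b c c' : Fin n → B,
      (∀ p ∈ C, ∃ x : B, (∀ i ∈ p.1, x ∈ Dset (b i) (c i) (c' i)) ∧
        (∀ j ∈ p.2, x ∉ Dset (b j) (c j) (c' j))) ∧
      (∀ p ∈ I, ∀ x : B, ¬ ((∀ i ∈ p.1, x ∈ Dset (b i) (c i) (c' i)) ∧
        (∀ j ∈ p.2, x ∉ Dset (b j) (c j) (c' j)))) := by
  classical
  obtain ⟨hC, ⟨p₀, hp₀⟩, hXor⟩ := hfc
  set X₀ : Set (Fin n) := p₀.1 with hX₀def
  have hX₀C : (X₀, X₀ᶜ) ∈ C := by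
    have h2 := hC p₀ (Or.inl hp₀)
    have : p₀ = (X₀, X₀ᶜ) := Prod.ext rfl h2
    rwa [← this]
  haveI := infinite_atoms_aux B
  obtain ⟨f, hf⟩ := exists_injective_nat (Set (Fin n))
  let em := Infinite.natEmbedding {a : B // IsAtom a}
  set g : Set (Fin n) → B := fun Y => (em (f Y)).1 with hgdef
  have hg_atom : ∀ Y, IsAtom (g Y) := fun Y => (em (f Y)).2
  have hg_inj : Function.Injective g := fun Y Z h => hf (em.injective (Subtype.ext h))
  set S : Set (Set (Fin n)) := {X | (X, Xᶜ) ∈ C} with hSdef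
  have hX₀S : X₀ ∈ S := hX₀C
  set b : Fin n → B := fun i =>
    (Finset.univ.filter (fun X : Set (Fin n) => X ∈ S ∧ ¬(i ∈ X ↔ i ∈ X₀))).sup g with hbdef
  set c : Fin n → B := fun _ => ⊥ with hcdef
  set c' : Fin n → B := fun i => if i ∈ X₀ then ⊤ else ⊥ with hc'def
  have htrace : ∀ X ∈ S, ∀ i : Fin n, g X ≤ b i ↔ ¬(i ∈ X ↔ i ∈ X₀) := by
    intro X hX i
    constructor
    · intro h
      obtain ⟨X', hX', hle⟩ := atom_le_finsetSup_aux (hg_atom X) h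
      rw [Finset.mem_filter] at hX'
      have hgg : g X = g X' := ((hg_atom X').le_iff.mp hle).resolve_left (hg_atom X).1
      rw [hg_inj hgg]
      exact hX'.2.2
    · intro h
      exact Finset.le_sup (Finset.mem_filter.mpr ⟨Finset.mem_univ _, hX, h⟩)
  have hbt : (⊥ : B) ≠ ⊤ := bot_ne_top
  have hrfl : (⊥ : B) = ⊥ := rfl
  have hD : ∀ (i : Fin n) (x : B),
      x ∈ Dset (b i) (c i) (c' i) ↔ ((IsAtom x ∧ x ≤ b i) ↔ i ∉ X₀) := by
    intro i x
    by_cases hi : i ∈ X₀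
    · simp only [Dset, hcdef, hc'def, if_pos hi, Set.mem_setOf_eq]
      tauto
    · simp only [Dset, hcdef, hc'def, if_neg hi, Set.mem_setOf_eq]
      tauto
  have hPiff : ∀ (x : B) (X : Set (Fin n)),
      ((∀ i ∈ X, x ∈ Dset (b i) (c i) (c' i)) ∧
        (∀ j ∈ Xᶜ, x ∉ Dset (b j) (c j) (c' j))) ↔
      (∀ i : Fin n, (((IsAtom x ∧ x ≤ b i) ↔ i ∉ X₀) ↔ i ∈ X)) := by
    intro x X
    constructor
    · rintro ⟨h1, h2⟩ i
      by_cases hiX : i ∈ X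
      · have := (hD i x).mp (h1 i hiX); tauto
      · have := h2 i hiX
        rw [hD i x] at this
        tauto
    · intro h
      constructor
      · intro i hi
        rw [hD i x]
        have := h i; tauto
      · intro j hj
        rw [Set.mem_compl_iff] at hj
        rw [hD j x]
        have := h j; tauto
  refine ⟨b, c, c', ?_, ?_⟩
  · intro p hp
    have hp2 : p.2 = p.1ᶜ := hC p (Or.inl hp)
    have hpS : p.1 ∈ S := by
      show (p.1, p.1ᶜ) ∈ C
      rw [← hp2]
      exact hp
    refine ⟨g p.1, ?_⟩
    rw [hp2, hPiff]
    intro i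
    have htr := htrace p.1 hpS i
    have hat := hg_atom p.1
    constructor
    · intro hh
      by_cases hi0 : i ∈ X₀ <;> tauto
    · intro hh
      by_cases hi0 : i ∈ X₀ <;> tauto
  · intro p hp x hx
    have hp2 : p.2 = p.1ᶜ := hC p (Or.inr hp)
    have hpI : (p.1, p.1ᶜ) ∈ I := by rw [← hp2]; exact hp
    have hpS : p.1 ∉ S := by
      intro hmem
      rcases hXor p.1 with ⟨-, hni⟩ | ⟨-, hnc⟩
      · exact hni hpI
      · exact hnc hmem
    rw [hp2, hPiff] at hx
    have hne : p.1 ≠ X₀ := fun h => hpS (h ▸ hX₀S)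
    have hex : ∃ i : Fin n, ¬(i ∈ p.1 ↔ i ∈ X₀) := by
      by_contra h'
      push_neg at h'
      exact hne (Set.ext fun i => h' i)
    obtain ⟨i, hi⟩ := hex
    have hQ : IsAtom x ∧ x ≤ b i := by
      have hxi := hx i
      by_cases h1 : i ∈ X₀ <;> by_cases h2 : i ∈ p.1 <;>
        simp only [h1, h2, not_true_eq_false, not_false_eq_true, iff_true, iff_false,
          not_not, true_iff] at hxi <;> tauto
    obtain ⟨X', hX'mem, hle⟩ := atom_le_finsetSup_aux hQ.1 hQ.2
    rw [Finset.mem_filter] at hX'mem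
    obtain ⟨-, hX'S, hiX'⟩ := hX'mem
    have hxg : x = g X' := ((hg_atom X').le_iff.mp hle).resolve_left hQ.1.1
    have hXeq : p.1 = X' := by
      ext j
      have hj := hx j
      rw [hxg, and_iff_right (hg_atom X'), htrace X' hX'S j] at hj
      by_cases h0 : j ∈ X₀ <;> by_cases h1 : j ∈ X' <;>
        simp only [h0, h1, not_true_eq_false, not_false_eq_true, iff_true, iff_false,
          not_not, true_iff] at hj ⊢ <;> tauto
    exact hpS (hXeq ▸ hX'S)

/- ### The language with one binary relation and its structure on `Set ℕ` -/

/-- A language with a single binary relation symbol. -/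
def patternLang : FirstOrder.Language.{0, 0} :=
  ⟨fun _ => Empty, fun k => match k with | 2 => PUnit | _ => Empty⟩

instance : patternLang.Structure (Set ℕ) where
  funMap := fun {k} f _ => Empty.elim f
  RelMap := fun {k} r v =>
    match k, r with
    | 2, _ => IsAtom (v 0) ∧ v 0 ≤ v 1

/-- The formula `(y₁ = y₂ ∧ R x y₀) ∨ (y₁ ≠ y₂ ∧ ¬ R x y₀)`. -/
def patternFormula : patternLang.Formula (Unit ⊕ Fin 3) :=
  ((Term.equal (Term.var (Sum.inr 1)) (Term.var (Sum.inr 2))) ⊓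
    (Relations.formula₂ (L := patternLang) PUnit.unit
      (Term.var (Sum.inl ())) (Term.var (Sum.inr 0)))) ⊔
  ((∼(Term.equal (Term.var (Sum.inr 1)) (Term.var (Sum.inr 2)))) ⊓
    (∼(Relations.formula₂ (L := patternLang) PUnit.unit
      (Term.var (Sum.inl ())) (Term.var (Sum.inr 0)))))

lemma realize_patternFormula (w : Unit ⊕ Fin 3 → Set ℕ) :
    patternFormula.Realize w ↔
      (w (Sum.inr 1) = w (Sum.inr 2) ∧
        (IsAtom (w (Sum.inl ())) ∧ w (Sum.inl ()) ≤ w (Sum.inr 0))) ∨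
      (¬ w (Sum.inr 1) = w (Sum.inr 2) ∧
        ¬ (IsAtom (w (Sum.inl ())) ∧ w (Sum.inl ()) ≤ w (Sum.inr 0))) := by
  have hrel : ∀ t₁ t₂ : Set ℕ,
      @Structure.RelMap patternLang (Set ℕ) _ 2 PUnit.unit ![t₁, t₂] ↔
        (IsAtom t₁ ∧ t₁ ≤ t₂) := by
    intro t₁ t₂
    exact Iff.rfl
  simp only [patternFormula, Formula.realize_sup, Formula.realize_inf, Formula.realize_not,
    Formula.realize_equal, Formula.realize_rel₂, Term.realize_var, hrel]
  exact Iff.rfl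

/- ### Main theorem -/

theorem fully_complete_patterns_realized_in_atomic_boolean_algebra
    (B : Type*) [BooleanAlgebra B] [Infinite B] [IsAtomic B]
    (n : ℕ) (C I : Set (Set (Fin n) × Set (Fin n)))
    (hpat : IsPattern C I) (hfc : FullyComplete C I) :
    (∃ b c c' : Fin n → B,
      (∀ p ∈ C,
        ((⋂ i ∈ p.1, Dset (b i) (c i) (c' i)) ∩ ⋂ j ∈ p.2, (Dset (b j) (c j) (c' j))ᶜ).Nonempty) ∧
      (∀ p ∈ I,
        (⋂ i ∈ p.1, Dset (b i) (c i) (c' i)) ∩ (⋂ j ∈ p.2, (Dset (b j) (c j) (c' j))ᶜ) = ∅)) ∧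
    Exhibitable C I := by
  constructor
  · obtain ⟨b, c, c', h1, h2⟩ := key_realization B n C I hfc
    refine ⟨b, c, c', ?_, ?_⟩
    · intro p hp
      obtain ⟨x, hx1, hx2⟩ := h1 p hp
      refine ⟨x, ?_⟩
      simp only [Set.mem_inter_iff, Set.mem_iInter, Set.mem_compl_iff]
      exact ⟨hx1, hx2⟩
    · intro p hp
      rw [Set.eq_empty_iff_forall_notMem]
      intro x hx
      simp only [Set.mem_inter_iff, Set.mem_iInter, Set.mem_compl_iff] at hx
      exact h2 p hp x hx
  · obtain ⟨b, c, c', h1, h2⟩ := key_realization (Set ℕ) n C I hfc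
    refine ⟨patternLang, patternLang.completeTheory (Set ℕ),
      completeTheory.isComplete _ _, Unit, Fin 3, patternFormula, ?_⟩
    refine ⟨Theory.ModelType.of _ (Set ℕ), fun i => ![b i, c i, c' i], ?_, ?_⟩
    · intro p hp
      obtain ⟨x, hx1, hx2⟩ := h1 p hp
      refine ⟨fun _ => x, ?_, ?_⟩
      · intro i hi
        erw [realize_patternFormula]
        have := hx1 i hi
        simp only [Dset, Set.mem_setOf_eq] at this
        simp only [Sum.elim_inl, Sum.elim_inr, Matrix.cons_val_zero, Matrix.cons_val_one,
          Matrix.head_cons, Matrix.cons_val_two, Matrix.tail_cons]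
        tauto
      · intro j hj
        erw [realize_patternFormula]
        have := hx2 j hj
        simp only [Dset, Set.mem_setOf_eq] at this
        simp only [Sum.elim_inl, Sum.elim_inr, Matrix.cons_val_zero, Matrix.cons_val_one,
          Matrix.head_cons, Matrix.cons_val_two, Matrix.tail_cons]
        tauto
    · rintro p hp ⟨a, ha1, ha2⟩
      refine h2 p hp (a ()) ⟨?_, ?_⟩
      · intro i hi
        have := ha1 i hi
        erw [realize_patternFormula] at this
        simp only [Sum.elim_inl, Sum.elim_inr, Matrix.cons_val_zero, Matrix.cons_val_one,
          Matrix.head_cons, Matrix.cons_val_two, Matrix.tail_cons] at this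
        simp only [Dset, Set.mem_setOf_eq]
        tauto
      · intro j hj
        have := ha2 j hj
        erw [realize_patternFormula] at this
        simp only [Sum.elim_inl, Sum.elim_inr, Matrix.cons_val_zero, Matrix.cons_val_one, Matrix.cons_val,
          Matrix.head_cons, Matrix.cons_val_two, Matrix.tail_cons] at this
        simp only [Dset, Set.mem_setOf_eq]
        show ¬ (_ ∨ _)
        tauto
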